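/- arXiv:2403.08514 — 2 statements merged into one kernel-verified Lean document; each statement's English description precedes it below -/
import Mathlib

section
/- Derivative of a spline function: let k ≥ 2, let r ≤ n be integers, let α : ℤ → ℝ satisfy α_j = 0 whenever j < r or j > n, and let f(x) = Σ_{j=r}^{n} α_j B_{j,k}(x). Then for every x ∈ ℝ that is not a knot (x ≠ t_i for all i ∈ ℤ), f is differentiable at x with derivative D f(x) = Σ_{j=r}^{n+1} (k − 1) · ((α_j − α_{j−1})/(t_{j+k−1} − t_j)) · B_{j,k−1}(x). -/
/-- B-splines of order `k ≥ 1` with knot sequence `t`, defined by the Cox–de Boor recursion: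
`B_{j,1}(x) = 1` if `t j ≤ x < t (j+1)` and `0` otherwise; and for `k ≥ 2`,
`B_{j,k}(x) = ((x − t_j)/(t_{j+k−1} − t_j)) B_{j,k−1}(x)
            + ((t_{j+k} − x)/(t_{j+k} − t_{j+1})) B_{j+1,k−1}(x)`.
(The value for order `0` is irrelevant and set to `0`.) -/
noncomputable def bspline (t : ℤ → ℝ) : ℕ → ℤ → ℝ → ℝ
  | 0, _, _ => 0
  | 1, j, x => if t j ≤ x ∧ x < t (j + 1) then 1 else 0
  | (k + 2), j, x =>
      ((x - t j) / (t (j + (k : ℤ) + 1) - t j)) * bspline t (k + 1) j x +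
      ((t (j + (k : ℤ) + 2) - x) / (t (j + (k : ℤ) + 2) - t (j + 1))) *
        bspline t (k + 1) (j + 1) x

set_option maxHeartbeats 1600000 in
lemma spline_key (M B0 B1 B2 x T0 T1 T2 U1 U2 U3 : ℝ)
    (d1 : U1 - T0 ≠ 0) (d2 : U2 - T1 ≠ 0) (d3 : U3 - T2 ≠ 0)
    (d4 : U2 - T0 ≠ 0) (d5 : U3 - T1 ≠ 0) :
    (M + 2) * (((x - T0) / (U1 - T0) * B0 + (U2 - x) / (U2 - T1) * B1) / (U2 - T0) -
        ((x - T1) / (U2 - T1) * B1 + (U3 - x) / (U3 - T2) * B2) / (U3 - T1)) =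
      1 / (U2 - T0) * ((x - T0) / (U1 - T0) * B0 + (U2 - x) / (U2 - T1) * B1) +
        (x - T0) / (U2 - T0) * ((M + 1) * (B0 / (U1 - T0) - B1 / (U2 - T1))) +
        (-1 / (U3 - T1) * ((x - T1) / (U2 - T1) * B1 + (U3 - x) / (U3 - T2) * B2) +
          (U3 - x) / (U3 - T1) * ((M + 1) * (B1 / (U2 - T1) - B2 / (U3 - T2)))) := by
  field_simp
  ring


lemma bspline_hasDerivAt (t : ℤ → ℝ) (ht : StrictMono t) (x : ℝ) (hx : ∀ i : ℤ, x ≠ t i) :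
    ∀ (k : ℕ) (j : ℤ), HasDerivAt (bspline t (k + 1) j)
      ((k : ℝ) * (bspline t k j x / (t (j + (k : ℤ)) - t j) -
        bspline t k (j + 1) x / (t (j + (k : ℤ) + 1) - t (j + 1)))) x := by
  intro k
  induction k with
  | zero =>
    intro j
    have h0 : ∃ c : ℝ, bspline t 1 j =ᶠ[nhds x] fun _ => c := by
      rcases lt_or_gt_of_ne (hx j) with h | h
      · refine ⟨0, ?_⟩
        filter_upwards [gt_mem_nhds h] with y hy
        simp [bspline, not_le.mpr hy]
      · rcases lt_or_gt_of_ne (hx (j + 1)) with h1 | h1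
        · refine ⟨1, ?_⟩
          filter_upwards [lt_mem_nhds h, gt_mem_nhds h1] with y hy hy1
          simp [bspline, le_of_lt hy, hy1]
        · refine ⟨0, ?_⟩
          filter_upwards [lt_mem_nhds h1] with y hy
          simp [bspline, not_lt.mpr (le_of_lt hy)]
    obtain ⟨c, hc⟩ := h0
    have := (hasDerivAt_const x c).congr_of_eventuallyEq hc
    exact this.congr_deriv (by simp)
  | succ k IH =>
    intro j
    have h1 := IH j
    have h2 := IH (j + 1)
    have haff1 : HasDerivAt (fun y => (y - t j) / (t (j + (k : ℤ) + 1) - t j))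
        (1 / (t (j + (k : ℤ) + 1) - t j)) x := by
      simpa using ((hasDerivAt_id x).sub_const (t j)).div_const (t (j + (k : ℤ) + 1) - t j)
    have haff2 : HasDerivAt (fun y => (t (j + (k : ℤ) + 2) - y) / (t (j + (k : ℤ) + 2) - t (j + 1)))
        (-1 / (t (j + (k : ℤ) + 2) - t (j + 1))) x := by
      simpa using ((hasDerivAt_const x (t (j + (k : ℤ) + 2))).sub (hasDerivAt_id x)).div_const
        (t (j + (k : ℤ) + 2) - t (j + 1))
    have hD : HasDerivAt (fun y => (y - t j) / (t (j + (k : ℤ) + 1) - t j) * bspline t (k + 1) j y +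
        (t (j + (k : ℤ) + 2) - y) / (t (j + (k : ℤ) + 2) - t (j + 1)) * bspline t (k + 1) (j + 1) y) _ x :=
      (haff1.mul h1).add (haff2.mul h2)
    have hfun : (fun y => (y - t j) / (t (j + (k : ℤ) + 1) - t j) * bspline t (k + 1) j y +
        (t (j + (k : ℤ) + 2) - y) / (t (j + (k : ℤ) + 2) - t (j + 1)) * bspline t (k + 1) (j + 1) y)
        = bspline t (k + 1 + 1) j := by
      funext y
      show _ = bspline t (k + 2) j y
      simp [bspline]
    rw [hfun] at hD
    convert hD using 1
    have hne : ∀ a b : ℤ, a < b → t b - t a ≠ 0 := fun a b hab =>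
      sub_ne_zero.mpr (ne_of_gt (ht hab))
    rcases Nat.eq_zero_or_pos k with rfl | hkpos
    · have e1 : j + ((0:ℕ):ℤ) = j := by push_cast; ring
      have e2 : j + ((0:ℕ):ℤ) + 1 = j + 1 := by push_cast; ring
      simp only [bspline, e1, e2]
      push_cast
      ring
    · obtain ⟨m, rfl⟩ := Nat.exists_eq_add_of_le hkpos
      -- k = 1 + m; order k+1 = m+2
      have em : (1 + m) = (m + 1) := by omega
      rw [em]
      -- expand bspline t (m+2) j x and bspline t (m+2) (j+1) x
      have exp1 : bspline t (m + 1 + 1) j x =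
          ((x - t j) / (t (j + (m : ℤ) + 1) - t j)) * bspline t (m + 1) j x +
          ((t (j + (m : ℤ) + 2) - x) / (t (j + (m : ℤ) + 2) - t (j + 1))) *
            bspline t (m + 1) (j + 1) x := by
        show bspline t (m + 2) j x = _
        simp [bspline]
      have exp2 : bspline t (m + 1 + 1) (j + 1) x =
          ((x - t (j + 1)) / (t (j + 1 + (m : ℤ) + 1) - t (j + 1))) * bspline t (m + 1) (j + 1) x +
          ((t (j + 1 + (m : ℤ) + 2) - x) / (t (j + 1 + (m : ℤ) + 2) - t (j + 2))) *
            bspline t (m + 1) (j + 2) x := by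
        show bspline t (m + 2) (j + 1) x = _
        norm_num [bspline]
        ring_nf
      rw [exp1, exp2]
      push_cast
      have e1 : j + ((m:ℤ) + 1 + 1) = j + (m:ℤ) + 2 := by ring
      have e2 : j + ((m:ℤ) + 1 + 1) + 1 = j + (m:ℤ) + 3 := by ring
      have e4 : j + ((m:ℤ) + 1) + 1 = j + (m:ℤ) + 2 := by ring
      have e5 : j + ((m:ℤ) + 1) + 2 = j + (m:ℤ) + 3 := by ring
      have e6 : j + 1 + ((m:ℤ) + 1) = j + (m:ℤ) + 2 := by ring
      have e7 : j + 1 + ((m:ℤ) + 1) + 1 = j + (m:ℤ) + 3 := by ring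
      have e8 : j + 1 + 1 = j + 2 := by ring
      have e9 : j + (1:ℤ) + (m:ℤ) + 1 = j + (m:ℤ) + 2 := by ring
      have e10 : j + (1:ℤ) + (m:ℤ) + 2 = j + (m:ℤ) + 3 := by ring
      have e11 : j + (m:ℤ) + 2 + 1 = j + (m:ℤ) + 3 := by ring
      have e12 : j + ((m:ℤ) + 1) = j + (m:ℤ) + 1 := by ring
      have e13 : j + (m:ℤ) + 1 + 1 = j + (m:ℤ) + 2 := by ring
      have e14 : j + (m:ℤ) + 1 + 2 = j + (m:ℤ) + 3 := by ring
      simp only [e1, e2, e4, e5, e6, e7, e8, e9, e10, e11, e12, e13, e14]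
      rw [show ((m:ℝ) + 1 + 1) = (m:ℝ) + 2 from by ring]
      have d1 := hne j (j + (m:ℤ) + 1) (by omega)
      have d2 := hne (j+1) (j + (m:ℤ) + 2) (by omega)
      have d3 := hne (j+2) (j + (m:ℤ) + 3) (by omega)
      have d4 := hne j (j + (m:ℤ) + 2) (by omega)
      have d5 := hne (j+1) (j + (m:ℤ) + 3) (by omega)
      set B0 := bspline t (m + 1) j x
      set B1 := bspline t (m + 1) (j + 1) x
      set B2 := bspline t (m + 1) (j + 2) x
      set T0 := t j
      set T1 := t (j + 1)
      set T2 := t (j + 2)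
      set U1 := t (j + (m:ℤ) + 1)
      set U2 := t (j + (m:ℤ) + 2)
      set U3 := t (j + (m:ℤ) + 3)
      exact spline_key (m:ℝ) B0 B1 B2 x T0 T1 T2 U1 U2 U3 d1 d2 d3 d4 d5

/-- Derivative of a spline function: if `α j = 0` for `j < r` or `j > n` and
`f(x) = Σ_{j=r}^{n} α j B_{j,k}(x)` with `k ≥ 2`, then at every non-knot point `x`,
`f` is differentiable with derivative
`Σ_{j=r}^{n+1} (k − 1) ((α j − α (j−1))/(t_{j+k−1} − t_j)) B_{j,k−1}(x)`. -/
theorem splineFunction_hasDerivAt (t : ℤ → ℝ) (ht : StrictMono t) (k : ℕ) (hk : 2 ≤ k)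
    (r n : ℤ) (hrn : r ≤ n) (α : ℤ → ℝ) (hα : ∀ j : ℤ, (j < r ∨ n < j) → α j = 0)
    (x : ℝ) (hx : ∀ i : ℤ, x ≠ t i) :
    HasDerivAt (fun y => ∑ j ∈ Finset.Icc r n, α j * bspline t k j y)
      (∑ j ∈ Finset.Icc r (n + 1),
        ((k : ℝ) - 1) * ((α j - α (j - 1)) / (t (j + (k : ℤ) - 1) - t j)) *
          bspline t (k - 1) j x) x := by
  obtain ⟨m, rfl⟩ : ∃ m, k = m + 2 := ⟨k - 2, by omega⟩
  set c : ℤ → ℝ := fun j => ((m : ℝ) + 1) * bspline t (m + 1) j x / (t (j + (m : ℤ) + 1) - t j)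
    with hc
  have hterm : ∀ j : ℤ, α j * (c j - c (j + 1)) =
      α j * (((m + 1 : ℕ) : ℝ) * (bspline t (m + 1) j x / (t (j + ((m + 1 : ℕ) : ℤ)) - t j) -
        bspline t (m + 1) (j + 1) x / (t (j + ((m + 1 : ℕ) : ℤ) + 1) - t (j + 1)))) := by
    intro j
    simp only [hc]
    push_cast
    rw [show j + ((m : ℤ) + 1) = j + (m : ℤ) + 1 from by ring]
    rw [show j + (m : ℤ) + 1 + 1 = j + 1 + (m : ℤ) + 1 from by ring]
    ring
  have hder : HasDerivAt (fun y => ∑ j ∈ Finset.Icc r n, α j * bspline t (m + 2) j y)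
      (∑ j ∈ Finset.Icc r n, α j * (c j - c (j + 1))) x := by
    apply HasDerivAt.fun_sum
    intro j _
    rw [hterm j]
    exact (bspline_hasDerivAt t ht x hx (m + 1) j).const_mul (α j)
  have hα1 : α (n + 1) = 0 := hα _ (Or.inr (by omega))
  have hα2 : α (r - 1) = 0 := hα _ (Or.inl (by omega))
  have htop : Finset.Icc r (n + 1) = insert (n + 1) (Finset.Icc r n) := by
    ext j; simp only [Finset.mem_Icc, Finset.mem_insert]; omega
  have hbot : Finset.Icc r (n + 1) = insert r (Finset.Icc (r + 1) (n + 1)) := by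
    ext j; simp only [Finset.mem_Icc, Finset.mem_insert]; omega
  have hshift : ∑ j ∈ Finset.Icc r n, α j * c (j + 1)
      = ∑ j ∈ Finset.Icc (r + 1) (n + 1), α (j - 1) * c j := by
    rw [show (r + 1) = r + 1 from rfl, ← Finset.map_add_right_Icc r n 1, Finset.sum_map]
    simp [addRightEmbedding]
  have hsum : ∑ j ∈ Finset.Icc r n, α j * (c j - c (j + 1))
      = ∑ j ∈ Finset.Icc r (n + 1), (α j - α (j - 1)) * c j := by
    have l1 : ∑ j ∈ Finset.Icc r (n + 1), α j * c j = ∑ j ∈ Finset.Icc r n, α j * c j := by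
      rw [htop, Finset.sum_insert (by simp), hα1]; ring
    have l2 : ∑ j ∈ Finset.Icc r (n + 1), α (j - 1) * c j
        = ∑ j ∈ Finset.Icc (r + 1) (n + 1), α (j - 1) * c j := by
      rw [hbot, Finset.sum_insert (by simp), hα2]; ring
    simp only [sub_mul, mul_sub, Finset.sum_sub_distrib]
    rw [l1, l2, hshift]
  have hfinal : ∑ j ∈ Finset.Icc r (n + 1), (α j - α (j - 1)) * c j
      = ∑ j ∈ Finset.Icc r (n + 1),
        (((m + 2 : ℕ) : ℝ) - 1) * ((α j - α (j - 1)) / (t (j + ((m + 2 : ℕ) : ℤ) - 1) - t j)) *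
          bspline t (m + 2 - 1) j x := by
    refine Finset.sum_congr rfl fun j _ => ?_
    simp only [hc]
    push_cast
    rw [show j + ((m : ℤ) + 2) - 1 = j + (m : ℤ) + 1 from by ring]
    show _ = _ * _ * bspline t (m + 1) j x
    ring
  rw [← hfinal, ← hsum]
  exact hder
end

section
/- Integral of a spline function: let k ≥ 1, let r ≤ n be integers, let α : ℤ → ℝ satisfy α_j = 0 whenever j < r or j > n, and let f(u) = Σ_{i=r}^{n} α_i B_{i,k}(u). For every x ∈ ℝ with t_r ≤ x, and s ∈ ℤ such that t_{s−1} < x ≤ t_s, one has ∫_{t_r}^{x} f(u) du = Σ_{i=r}^{s−1} ( Σ_{j=r}^{i} α_j (t_{j+k} − t_j)/k ) · B_{i,k+1}(x), where the sums are over the indicated integer ranges (empty sums being zero). -/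
open Finset in
lemma sum_Icc_top (r m : ℤ) (f : ℤ → ℝ) (h : r ≤ m + 1) :
    ∑ i ∈ Icc r (m+1), f i = (∑ i ∈ Icc r m, f i) + f (m+1) := by
  have h2 : Icc r (m+1) = insert (m+1) (Icc r m) := by ext i; simp; omega
  rw [h2, Finset.sum_insert (by simp), add_comm]

open Finset in
lemma abel_lemma (r : ℤ) (A d : ℤ → ℝ) :
    ∀ m : ℤ, r - 1 ≤ m →
    ∑ i ∈ Icc r m, A i * (d i - d (i+1)) =
      (∑ i ∈ Icc r m, (A i - A (i-1)) * d i) + A (r-1) * d r - A m * d (m+1) := by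
  refine Int.le_induction ?_ ?_
  · simp [show r - 1 + 1 = r by ring]
  · intro m hm ih
    rw [sum_Icc_top r m _ (by omega), sum_Icc_top r m _ (by omega), ih]
    ring_nf


lemma bspline_rec (t : ℤ → ℝ) (k : ℕ) (j : ℤ) (x : ℝ) :
    bspline t (k + 2) j x =
      ((x - t j) / (t (j + (k : ℤ) + 1) - t j)) * bspline t (k + 1) j x +
      ((t (j + (k : ℤ) + 2) - x) / (t (j + (k : ℤ) + 2) - t (j + 1))) *
        bspline t (k + 1) (j + 1) x := rfl

lemma bspline_one (t : ℤ → ℝ) (j : ℤ) (x : ℝ) :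
    bspline t 1 j x = if t j ≤ x ∧ x < t (j + 1) then 1 else 0 := rfl

lemma bspline_support (t : ℤ → ℝ) (ht : Monotone t) :
    ∀ (k : ℕ) (j : ℤ) (x : ℝ), (x < t j ∨ t (j + (k+1 : ℕ)) ≤ x) → bspline t (k+1) j x = 0 := by
  intro k
  induction k with
  | zero =>
    intro j x h
    rw [bspline_one, if_neg]
    push_cast at h
    rintro ⟨h1, h2⟩
    rcases h with h | h
    · exact absurd h1 (not_le.2 h)
    · exact absurd h2 (not_lt.2 h)
  | succ k ih =>
    intro j x h
    push_cast at h ⊢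
    rw [bspline_rec]
    have h1 : bspline t (k+1) j x = 0 := by
      apply ih; push_cast
      rcases h with h | h
      · exact Or.inl h
      · exact Or.inr (le_trans (ht (by omega)) h)
    have h2 : bspline t (k+1) (j+1) x = 0 := by
      apply ih; push_cast
      rcases h with h | h
      · exact Or.inl (lt_of_lt_of_le h (ht (by omega)))
      · refine Or.inr (le_of_eq_of_le ?_ h); congr 1; ring
    rw [h1, h2]; ring

lemma bspline_zero_of_le (t : ℤ → ℝ) (ht : StrictMono t) (k : ℕ) (j : ℤ) (x : ℝ)
    (h : x ≤ t j) : bspline t (k+2) j x = 0 := by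
  rcases eq_or_lt_of_le h with h | h
  · rw [bspline_rec]
    have h2 : bspline t (k+1) (j+1) x = 0 := by
      apply bspline_support t ht.monotone
      exact Or.inl (h ▸ ht (by omega))
    rw [h2, ← h]
    ring
  · exact bspline_support t ht.monotone (k+1) j x (Or.inl h)

lemma bspline_one_locally_const (t : ℤ → ℝ) (j : ℤ) (x : ℝ) :
    ∀ᶠ y in nhdsWithin x (Set.Ici x), bspline t 1 j y = bspline t 1 j x := by
  rcases lt_or_ge x (t j) with h | h
  · filter_upwards [nhdsWithin_le_nhds (Iio_mem_nhds h)] with y hy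
    rw [bspline_one, bspline_one, if_neg (by rintro ⟨h1,_⟩; exact absurd h1 (not_le.2 hy)),
      if_neg (by rintro ⟨h1,_⟩; linarith)]
  rcases lt_or_ge x (t (j+1)) with h2 | h2
  · filter_upwards [nhdsWithin_le_nhds (Iio_mem_nhds h2), self_mem_nhdsWithin] with y hy hy2
    rw [bspline_one, bspline_one, if_pos ⟨le_trans h hy2, hy⟩, if_pos ⟨h, h2⟩]
  · filter_upwards [self_mem_nhdsWithin] with y hy
    rw [bspline_one, bspline_one, if_neg (by rintro ⟨_,h1⟩; have : x ≤ y := hy; linarith),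
      if_neg (by rintro ⟨_,h1⟩; linarith)]

lemma deriv_identity (K x T0 T1 T2 V1 V2 V3 C0 C1 C2 : ℝ)
    (h0 : V1 - T0 ≠ 0) (h1 : V2 - T1 ≠ 0) (h2 : V3 - T2 ≠ 0)
    (ha : V2 - T0 ≠ 0) (hb : V3 - T1 ≠ 0) :
    (K+1) * (((x-T0)/(V1-T0)*C0 + (V2-x)/(V2-T1)*C1)/(V2-T0)
        - ((x-T1)/(V2-T1)*C1 + (V3-x)/(V3-T2)*C2)/(V3-T1))
    = 1/(V2-T0) * ((x-T0)/(V1-T0)*C0 + (V2-x)/(V2-T1)*C1)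
      + (x-T0)/(V2-T0) * (K * (C0/(V1-T0) - C1/(V2-T1)))
      + (-1/(V3-T1) * ((x-T1)/(V2-T1)*C1 + (V3-x)/(V3-T2)*C2)
      + (V3-x)/(V3-T1) * (K * (C1/(V2-T1) - C2/(V3-T2)))) := by
  field_simp
  ring

set_option maxHeartbeats 1000000 in
lemma bspline_hasDerivWithinAt (t : ℤ → ℝ) (ht : StrictMono t) :
    ∀ (k : ℕ) (j : ℤ) (x : ℝ),
      HasDerivWithinAt (bspline t (k+1) j)
        ((k:ℝ) * (bspline t k j x / (t (j + (k:ℤ)) - t j)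
          - bspline t k (j+1) x / (t (j + 1 + (k:ℤ)) - t (j+1)))) (Set.Ici x) x := by
  have tne : ∀ p q : ℤ, p < q → t q - t p ≠ 0 := fun p q h => ne_of_gt (by linarith [ht h])
  intro k
  induction k with
  | zero =>
    intro j x
    have h0 := (hasDerivWithinAt_const x (Set.Ici x) (bspline t 1 j x)).congr_of_eventuallyEq
      (bspline_one_locally_const t j x) rfl
    refine h0.congr_deriv ?_
    push_cast; ring
  | succ k ih =>
    intro j x
    have h1 : HasDerivWithinAt (fun y => (y - t j) / (t (j + (k:ℤ) + 1) - t j))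
        (1 / (t (j + (k:ℤ) + 1) - t j)) (Set.Ici x) x := by
      simpa using (((hasDerivWithinAt_id x (Set.Ici x)).sub_const (t j)).div_const
        (t (j + (k:ℤ) + 1) - t j))
    have h2 : HasDerivWithinAt (fun y => (t (j + (k:ℤ) + 2) - y) / (t (j + (k:ℤ) + 2) - t (j+1)))
        (-1 / (t (j + (k:ℤ) + 2) - t (j+1))) (Set.Ici x) x := by
      have := ((hasDerivWithinAt_const x (Set.Ici x) (t (j + (k:ℤ) + 2))).sub
        (hasDerivWithinAt_id x (Set.Ici x))).div_const (t (j + (k:ℤ) + 2) - t (j+1))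
      simpa using this
    have hsum := (h1.mul (ih j x)).add (h2.mul (ih (j+1) x))
    have heq : bspline t (k+2) j = fun y =>
        ((y - t j) / (t (j + (k:ℤ) + 1) - t j)) * bspline t (k+1) j y +
        ((t (j + (k:ℤ) + 2) - y) / (t (j + (k:ℤ) + 2) - t (j+1))) * bspline t (k+1) (j+1) y :=
      rfl
    rw [heq]
    refine hsum.congr_deriv (Eq.symm ?_)
    -- now the algebraic identity
    match k with
    | 0 =>
      show ((1:ℕ):ℝ) * _ = _
      have e1 : bspline t 0 j x = 0 := rfl
      have e2 : bspline t 0 (j+1) x = 0 := rfl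
      have e3 : bspline t 0 (j+1+1) x = 0 := rfl
      push_cast
      rw [e1, e2, e3]
      ring_nf
    | (m+1) =>
      have r1 := bspline_rec t m j x
      have r2 := bspline_rec t m (j+1) x
      have key := deriv_identity ((m:ℝ)+1) x (t j) (t (j+1)) (t (j+1+1))
        (t (j+(m:ℤ)+1)) (t (j+(m:ℤ)+2)) (t (j+(m:ℤ)+3))
        (bspline t (m+1) j x) (bspline t (m+1) (j+1) x) (bspline t (m+1) (j+1+1) x)
        (tne j (j+(m:ℤ)+1) (by omega)) (tne (j+1) (j+(m:ℤ)+2) (by omega))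
        (tne (j+1+1) (j+(m:ℤ)+3) (by omega))
        (tne j (j+(m:ℤ)+2) (by omega)) (tne (j+1) (j+(m:ℤ)+3) (by omega))
      push_cast at r1 r2 key ⊢
      ring_nf at r1 r2 key ⊢
      linear_combination key + (((m:ℝ)+1) * (-t j + t (2+j+(m:ℤ)))⁻¹) * r1
        - (((m:ℝ)+1) * (-t (1+j) + t (3+j+(m:ℤ)))⁻¹) * r2

lemma bspline_two (t : ℤ → ℝ) (ht : StrictMono t) (j : ℤ) (x : ℝ) :
    bspline t 2 j x =
      max 0 (min ((x - t j) / (t (j+1) - t j)) ((t (j+2) - x) / (t (j+2) - t (j+1)))) := by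
  have e : bspline t 2 j x =
      ((x - t j) / (t (j+1) - t j)) * bspline t 1 j x +
      ((t (j+2) - x) / (t (j+2) - t (j + 1))) * bspline t 1 (j + 1) x := by
    have := bspline_rec t 0 j x
    push_cast at this
    convert this using 4 <;> ring_nf
  have d1 : (0:ℝ) < t (j+1) - t j := by have := ht (show j < j+1 by omega); linarith
  have d2 : (0:ℝ) < t (j+2) - t (j+1) := by have := ht (show j+1 < j+2 by omega); linarith
  set a := (x - t j) / (t (j+1) - t j) with ha
  set b := (t (j+2) - x) / (t (j+2) - t (j+1)) with hb
  rw [e, bspline_one, bspline_one]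
  have e2 : j + 1 + 1 = j + 2 := by ring
  rw [e2]
  rcases lt_or_ge x (t j) with h1 | h1
  · have hx2 : x < t (j+1) := by linarith
    have hx3 : x < t (j+2) := by linarith
    rw [if_neg (by rintro ⟨h,_⟩; linarith), if_neg (by rintro ⟨h,_⟩; linarith)]
    have haneg : a ≤ 0 := le_of_lt (div_neg_of_neg_of_pos (by linarith) d1)
    have hab : a ≤ b := le_trans haneg (le_of_lt (div_pos (by linarith) d2))
    rw [min_eq_left hab, max_eq_left haneg]; ring
  rcases lt_or_ge x (t (j+1)) with h2 | h2
  · rw [if_pos ⟨h1, h2⟩, if_neg (by rintro ⟨h,_⟩; linarith)]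
    have hlt : a < 1 := (div_lt_one d1).2 (by linarith)
    have hgt : 1 < b := (one_lt_div d2).2 (by linarith)
    rw [min_eq_left (by linarith), max_eq_right (div_nonneg (by linarith) (le_of_lt d1))]
    ring
  rcases lt_or_ge x (t (j+2)) with h3 | h3
  · rw [if_neg (by rintro ⟨_,h⟩; linarith), if_pos ⟨h2, h3⟩]
    have hge : 1 ≤ a := (one_le_div d1).2 (by linarith)
    have hle : b ≤ 1 := (div_le_one d2).2 (by linarith)
    rw [min_eq_right (by linarith), max_eq_right (div_nonneg (by linarith) (le_of_lt d2))]
    ring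
  · rw [if_neg (by rintro ⟨_,h⟩; linarith), if_neg (by rintro ⟨_,h⟩; linarith)]
    have hble : b ≤ 0 := div_nonpos_of_nonpos_of_nonneg (by linarith) (le_of_lt d2)
    rw [max_eq_left (le_trans (min_le_right _ _) hble)]; ring

lemma bspline_continuous (t : ℤ → ℝ) (ht : StrictMono t) :
    ∀ (k : ℕ) (j : ℤ), Continuous (bspline t (k+2) j) := by
  intro k
  induction k with
  | zero =>
    intro j
    have : bspline t 2 j = fun x =>
        max 0 (min ((x - t j) / (t (j+1) - t j)) ((t (j+2) - x) / (t (j+2) - t (j+1)))) := by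
      funext x; exact bspline_two t ht j x
    rw [this]
    fun_prop
  | succ k ih =>
    intro j
    have : bspline t (k+1+2) j = fun x =>
      ((x - t j) / (t (j + (k+1 : ℕ) + 1) - t j)) * bspline t (k + 2) j x +
      ((t (j + (k+1 : ℕ) + 2) - x) / (t (j + (k+1 : ℕ) + 2) - t (j + 1))) *
        bspline t (k + 2) (j + 1) x := by
      funext x; exact bspline_rec t (k+1) j x
    rw [this]
    have c1 := ih j
    have c2 := ih (j+1)
    fun_prop

lemma bspline_intervalIntegrable (t : ℤ → ℝ) (ht : StrictMono t) (k : ℕ) (j : ℤ) (a b : ℝ) :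
    IntervalIntegrable (bspline t k j) MeasureTheory.volume a b := by
  match k with
  | 0 =>
    have : bspline t 0 j = fun _ => (0:ℝ) := rfl
    rw [this]; exact intervalIntegrable_const
  | 1 =>
    have : bspline t 1 j = Set.indicator (Set.Ico (t j) (t (j+1))) (fun _ => (1:ℝ)) := by
      funext x
      rw [bspline_one, Set.indicator_apply]
      simp [Set.mem_Ico]
    rw [this, intervalIntegrable_iff]
    exact (MeasureTheory.integrableOn_const measure_Ioc_lt_top.ne).indicator
      measurableSet_Ico
  | (k+2) => exact (bspline_continuous t ht k j).intervalIntegrable a b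


set_option maxHeartbeats 1000000 in
open Finset MeasureTheory in
/-- Integral of a spline function: if `α j = 0` for `j < r` or `j > n` and
`f(u) = Σ_{i=r}^{n} α i B_{i,k}(u)` with `k ≥ 1`, then for every `x ≥ t r` and `s` with
`t_{s−1} < x ≤ t_s`,
`∫_{t_r}^{x} f(u) du = Σ_{i=r}^{s−1} (Σ_{j=r}^{i} α j (t_{j+k} − t_j)/k) B_{i,k+1}(x)`. -/
theorem splineFunction_integral (t : ℤ → ℝ) (ht : StrictMono t) (k : ℕ) (hk : 1 ≤ k)
    (r n : ℤ) (hrn : r ≤ n) (α : ℤ → ℝ) (hα : ∀ j : ℤ, (j < r ∨ n < j) → α j = 0)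
    (x : ℝ) (hx : t r ≤ x) (s : ℤ) (hs₁ : t (s - 1) < x) (hs₂ : x ≤ t s) :
    ∫ u in (t r)..x, (∑ i ∈ Finset.Icc r n, α i * bspline t k i u) =
      ∑ i ∈ Finset.Icc r (s - 1),
        (∑ j ∈ Finset.Icc r i, α j * (t (j + (k : ℤ)) - t j) / (k : ℝ)) *
          bspline t (k + 1) i x := by
  obtain ⟨m, rfl⟩ : ∃ m, k = m + 1 := ⟨k - 1, (Nat.succ_pred_eq_of_pos hk).symm⟩
  have tne : ∀ p q : ℤ, p < q → t q - t p ≠ 0 := fun p q h => ne_of_gt (by linarith [ht h])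
  have hrs : r ≤ s := ht.le_iff_le.mp (hx.trans hs₂)
  set A : ℤ → ℝ := fun i => ∑ j ∈ Finset.Icc r i, α j * (t (j + ((m+1:ℕ):ℤ)) - t j) / ((m+1:ℕ):ℝ)
    with hA
  set g : ℝ → ℝ := fun u => ∑ i ∈ Finset.Icc r (s-1), A i *
    (((m+1:ℕ):ℝ) * (bspline t (m+1) i u / (t (i + ((m+1:ℕ):ℤ)) - t i)
      - bspline t (m+1) (i+1) u / (t (i + 1 + ((m+1:ℕ):ℤ)) - t (i+1)))) with hg
  set F : ℝ → ℝ := fun y => ∑ i ∈ Finset.Icc r (s-1), A i * bspline t (m+1+1) i y with hF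
  have ftc : ∫ u in (t r)..x, g u = F x - F (t r) := by
    refine intervalIntegral.integral_eq_sub_of_hasDeriv_right_of_le hx ?_ ?_ ?_
    · rw [hF]
      exact (continuous_finset_sum _ (fun i _ =>
        continuous_const.mul (bspline_continuous t ht m i))).continuousOn
    · intro u hu
      simp only [hF, hg]
      refine HasDerivWithinAt.fun_sum fun i _ => ?_
      exact ((bspline_hasDerivWithinAt t ht (m+1) i u).const_mul (A i)).mono
        Set.Ioi_subset_Ici_self
    · rw [hg]
      have hsum := IntervalIntegrable.sum (μ := MeasureTheory.volume) (a := t r) (b := x)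
        (Finset.Icc r (s-1))
        (f := fun i u => A i * (((m+1:ℕ):ℝ) * (bspline t (m+1) i u / (t (i + ((m+1:ℕ):ℤ)) - t i)
          - bspline t (m+1) (i+1) u / (t (i + 1 + ((m+1:ℕ):ℤ)) - t (i+1)))))
        (fun i _ => ((((bspline_intervalIntegrable t ht (m+1) i (t r) x).div_const _).sub
          ((bspline_intervalIntegrable t ht (m+1) (i+1) (t r) x).div_const _)).const_mul
            _).const_mul _)
      have heqf : (∑ i ∈ Finset.Icc r (s-1), fun u => A i *
          (((m+1:ℕ):ℝ) * (bspline t (m+1) i u / (t (i + ((m+1:ℕ):ℤ)) - t i)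
          - bspline t (m+1) (i+1) u / (t (i + 1 + ((m+1:ℕ):ℤ)) - t (i+1)))))
          = fun u => ∑ i ∈ Finset.Icc r (s-1), A i *
          (((m+1:ℕ):ℝ) * (bspline t (m+1) i u / (t (i + ((m+1:ℕ):ℤ)) - t i)
          - bspline t (m+1) (i+1) u / (t (i + 1 + ((m+1:ℕ):ℤ)) - t (i+1)))) := by
        funext u
        simp [Finset.sum_apply]
      rwa [heqf] at hsum
  have hF0 : F (t r) = 0 := by
    rw [hF]
    apply Finset.sum_eq_zero
    intro i hi
    rw [bspline_zero_of_le t ht m i (t r) (ht.monotone (Finset.mem_Icc.mp hi).1), mul_zero]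
  have hae : ∫ u in (t r)..x, (∑ i ∈ Finset.Icc r n, α i * bspline t (m+1) i u)
      = ∫ u in (t r)..x, g u := by
    apply intervalIntegral.integral_congr_ae
    have hne : ∀ᵐ (u:ℝ) ∂volume, u ≠ t s := by
      rw [MeasureTheory.ae_iff]
      have : {a : ℝ | ¬ a ≠ t s} = {t s} := by ext a; simp
      rw [this]
      exact Real.volume_singleton
    filter_upwards [hne] with u hu hmem
    have hux : u ≤ x := by
      rcases Set.mem_uIoc.mp hmem with ⟨_, h⟩ | ⟨_, h⟩
      · exact h
      · exact h.trans hx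
    have hus : u < t s := lt_of_le_of_ne (hux.trans hs₂) hu
    have hzero : ∀ i : ℤ, s ≤ i → bspline t (m+1) i u = 0 := fun i hi =>
      bspline_support t ht.monotone m i u (Or.inl (lt_of_lt_of_le hus (ht.monotone hi)))
    set d : ℤ → ℝ := fun i => bspline t (m+1) i u / (t (i + ((m+1:ℕ):ℤ)) - t i) with hd
    have e1 : ∑ i ∈ Finset.Icc r n, α i * bspline t (m+1) i u
        = ∑ i ∈ Finset.Icc r (max n (s-1)), α i * bspline t (m+1) i u := by
      apply Finset.sum_subset (Finset.Icc_subset_Icc_right (le_max_left _ _))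
      intro i hi hni
      simp only [Finset.mem_Icc] at hi hni
      rw [hα i (Or.inr (by omega)), zero_mul]
    have e2 : ∑ i ∈ Finset.Icc r (s-1), α i * bspline t (m+1) i u
        = ∑ i ∈ Finset.Icc r (max n (s-1)), α i * bspline t (m+1) i u := by
      apply Finset.sum_subset (Finset.Icc_subset_Icc_right (le_max_right _ _))
      intro i hi hni
      simp only [Finset.mem_Icc] at hi hni
      rw [hzero i (by omega), mul_zero]
    have habel := abel_lemma r A d (s-1) (by omega)
    have hAr : A (r-1) = 0 := by
      rw [hA]
      simp [Finset.Icc_eq_empty (show ¬ r ≤ r - 1 by omega)]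
    have hds : d s = 0 := by
      rw [hd]
      simp only [hzero s le_rfl, zero_div]
    rw [show s - 1 + 1 = s by ring] at habel
    have e3 : g u = ∑ i ∈ Finset.Icc r (s-1), α i * bspline t (m+1) i u := by
      rw [hg]
      beta_reduce
      have : ∀ i ∈ Finset.Icc r (s-1), A i *
          (((m+1:ℕ):ℝ) * (bspline t (m+1) i u / (t (i + ((m+1:ℕ):ℤ)) - t i)
            - bspline t (m+1) (i+1) u / (t (i + 1 + ((m+1:ℕ):ℤ)) - t (i+1))))
          = ((m+1:ℕ):ℝ) * (A i * (d i - d (i+1))) := by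
        intro i _
        rw [hd]
        ring
      rw [Finset.sum_congr rfl this, ← Finset.mul_sum, habel, hAr, hds]
      rw [zero_mul, add_zero, mul_zero, sub_zero, Finset.mul_sum]
      apply Finset.sum_congr rfl
      intro i hi
      obtain ⟨hri, his⟩ := Finset.mem_Icc.mp hi
      have hAi : A i - A (i-1) = α i * (t (i + ((m+1:ℕ):ℤ)) - t i) / ((m+1:ℕ):ℝ) := by
        have h1 := sum_Icc_top r (i-1)
          (fun j => α j * (t (j + ((m+1:ℕ):ℤ)) - t j) / ((m+1:ℕ):ℝ)) (by omega)
        rw [show i - 1 + 1 = i by ring] at h1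
        beta_reduce at h1
        rw [hA]
        beta_reduce
        rw [h1]
        ring
      rw [hAi, hd]
      beta_reduce
      have hδ : t (i + ((m+1:ℕ):ℤ)) - t i ≠ 0 :=
        tne i (i + ((m+1:ℕ):ℤ)) (by push_cast; omega)
      have hm : ((m+1:ℕ):ℝ) ≠ 0 := Nat.cast_ne_zero.2 (by omega)
      have hrw : ((m+1:ℕ):ℝ) * (α i * (t (i + ((m+1:ℕ):ℤ)) - t i) / ((m+1:ℕ):ℝ) *
          (bspline t (m+1) i u / (t (i + ((m+1:ℕ):ℤ)) - t i)))
          = (α i * bspline t (m+1) i u) * ((t (i + ((m+1:ℕ):ℤ)) - t i) / (t (i + ((m+1:ℕ):ℤ)) - t i))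
            * (((m+1:ℕ):ℝ) / ((m+1:ℕ):ℝ)) := by ring
      rw [hrw, div_self hδ, div_self hm, mul_one, mul_one]
    rw [e1, ← e2, e3]
  rw [hae, ftc, hF0, sub_zero, hF]
end
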